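/- arXiv:1308.5589 — 4 statements merged into one kernel-verified Lean document; each statement's English description precedes it below -/
import Mathlib

section
/- For all real numbers a, b > 0, the integral from 0 to infinity of e^{-a r} J_0(sqrt(b r)) dr equals (1/a) e^{-b/(4a)}, where J_0 is the Bessel function of the first kind of order zero. -/
open MeasureTheory Real Complex

lemma cosW_odd (m : ℕ) : ∫ θ in (0:ℝ)..(2*π), Real.cos θ ^ (2*m+1) = 0 := by
  induction m with
  | zero => simp [integral_cos, Real.sin_two_pi]
  | succ m ih =>
      have h : 2*(m+1)+1 = (2*m+1) + 2 := by ring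
      rw [h, integral_cos_pow]
      simp [Real.sin_two_pi, ih]

lemma cosW_even (m : ℕ) : ∫ θ in (0:ℝ)..(2*π), Real.cos θ ^ (2*m)
    = 2*π * (Nat.factorial (2*m)) / (4^m * (Nat.factorial m)^2) := by
  induction m with
  | zero => simp
  | succ m ih =>
      have h : 2*(m+1) = (2*m) + 2 := by ring
      rw [h, integral_cos_pow]
      rw [ih]
      simp only [Real.sin_two_pi, Real.sin_zero]
      have h2 : (2*m+2).factorial = (2*m+2)*((2*m+1)*(2*m).factorial) := by
        rw [show 2*m+2 = (2*m+1)+1 from rfl, Nat.factorial_succ, Nat.factorial_succ]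
      have h3 : (m+1).factorial = (m+1) * m.factorial := Nat.factorial_succ m
      have hm : ((m:ℝ)+1) ≠ 0 := by positivity
      have hf : ((m.factorial:ℝ)) ≠ 0 := by positivity
      have h4 : (4:ℝ)^m ≠ 0 := by positivity
      rw [h2, h3]
      push_cast
      field_simp
      ring

noncomputable def besselJ0 (x : ℝ) : ℂ :=
  (1 / (2 * π)) * ∫ θ in (0:ℝ)..(2 * π), Complex.exp (Complex.I * x * Real.cos θ)

lemma besselJ0_hasSum (x : ℝ) :
    HasSum (fun m : ℕ => ((((-1)^m * x^(2*m) / (4^m * (Nat.factorial m)^2) : ℝ)) : ℂ))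
      (besselJ0 x) := by
  have hexp : ∀ θ : ℝ, HasSum (fun n : ℕ => (Complex.I*x*Real.cos θ)^n / n.factorial)
      (Complex.exp (Complex.I*x*Real.cos θ)) := by
    intro θ
    rw [Complex.exp_eq_exp_ℂ]
    exact NormedSpace.expSeries_div_hasSum_exp _
  have hsum : HasSum
      (fun n : ℕ => ∫ θ in (0:ℝ)..(2*π), (Complex.I*x*Real.cos θ)^n / n.factorial)
      (∫ θ in (0:ℝ)..(2*π), Complex.exp (Complex.I*x*Real.cos θ)) := by
    apply intervalIntegral.hasSum_integral_of_dominated_convergence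
      (bound := fun n _ => |x|^n / n.factorial)
    · intro n
      apply Continuous.aestronglyMeasurable
      fun_prop
    · intro n
      filter_upwards with θ _
      have h1 : ‖((Complex.I*(x:ℂ)*(Real.cos θ:ℂ))^n / ((n.factorial:ℕ):ℂ))‖
          = (|x| * |Real.cos θ|)^n / n.factorial := by
        rw [norm_div, norm_pow]
        congr 1
        · congr 1
          rw [norm_mul, norm_mul, Complex.norm_I, Complex.norm_real, Complex.norm_real, one_mul,
            Real.norm_eq_abs, Real.norm_eq_abs]
        · simp
      rw [h1]
      gcongr
      all_goals nlinarith [Real.abs_cos_le_one θ, abs_nonneg x, abs_nonneg (Real.cos θ),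
        mul_nonneg (abs_nonneg x) (abs_nonneg (Real.cos θ))]
    · filter_upwards with θ _
      exact Real.summable_pow_div_factorial |x|
    · exact intervalIntegrable_const
    · filter_upwards with θ _
      exact hexp θ
  have hint : ∀ n : ℕ, (∫ θ in (0:ℝ)..(2*π), (Complex.I*x*Real.cos θ)^n / n.factorial)
      = (Complex.I*x)^n / n.factorial * ((∫ θ in (0:ℝ)..(2*π), Real.cos θ ^ n : ℝ) : ℂ) := by
    intro n
    rw [← intervalIntegral.integral_ofReal, ← intervalIntegral.integral_const_mul]
    congr 1 with θ
    push_cast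
    rw [mul_pow]
    ring
  simp_rw [hint] at hsum
  have hsum2 := hsum.mul_left (1 / (2 * (π:ℂ)))
  have hb : besselJ0 x = (1 / (2 * (π:ℂ))) *
      ∫ θ in (0:ℝ)..(2*π), Complex.exp (Complex.I*x*Real.cos θ) := by
    rw [besselJ0]
  rw [← hb] at hsum2
  have hinj : Function.Injective (fun m : ℕ => 2*m) := fun a b h => by
    simp only at h; omega
  have h0 : ∀ n ∉ Set.range (fun m : ℕ => 2*m),
      (1 / (2 * (π:ℂ))) * ((Complex.I*x)^n / n.factorial *
        ((∫ θ in (0:ℝ)..(2*π), Real.cos θ ^ n : ℝ) : ℂ)) = 0 := by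
    intro n hn
    obtain ⟨k, hk⟩ : Odd n := by
      rcases Nat.even_or_odd n with ⟨k, hk⟩ | ho
      · exact absurd ⟨k, show 2*k = n by omega⟩ hn
      · exact ho
    rw [hk, cosW_odd k]
    simp
  have key := (Function.Injective.hasSum_iff hinj h0).mpr hsum2
  convert key using 1
  funext m
  simp only [Function.comp]
  rw [cosW_even m]
  have hπ : (π:ℂ) ≠ 0 := by exact_mod_cast Real.pi_ne_zero
  have hf2 : (((2*m).factorial : ℕ):ℂ) ≠ 0 := by exact_mod_cast Nat.factorial_ne_zero _
  have hfm : ((m.factorial : ℕ):ℂ) ≠ 0 := by exact_mod_cast Nat.factorial_ne_zero _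
  have hI : (Complex.I*x)^(2*m) = (-1)^m * (x:ℂ)^(2*m) := by
    rw [pow_mul, show (Complex.I*(x:ℂ))^2 = -(x^2) by
      rw [mul_pow, Complex.I_sq]; ring]
    rw [show -((x:ℂ)^2) = (-1) * x^2 by ring, mul_pow, ← pow_mul]
  rw [hI]
  push_cast
  have h4 : ((4:ℂ))^m ≠ 0 := pow_ne_zero _ (by norm_num)
  field_simp [hπ, hf2, hfm, h4]

/-- For all `a, b > 0`, `∫_0^∞ e^{-a r} J₀(√(b r)) dr = (1/a) e^{-b/(4a)}`. -/
theorem integral_exp_mul_besselJ0 (a b : ℝ) (ha : 0 < a) (hb : 0 < b) :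
    ∫ r in Set.Ioi (0:ℝ), (Real.exp (-a * r) : ℂ) * besselJ0 (Real.sqrt (b * r))
      = (1 / a) * Real.exp (-b / (4 * a)) := by
  have ha' : a ≠ 0 := ne_of_gt ha
  -- the real-valued summand functions
  set g : ℕ → ℝ → ℝ := fun m r =>
    Real.exp (-a*r) * ((-1)^m * (b*r)^m / (4^m * ((m.factorial : ℝ))^2)) with hg
  set F : ℕ → ℝ → ℂ := fun m r => ((g m r : ℝ) : ℂ) with hF
  -- basic integral formula
  have hint_r : ∀ m : ℕ, ∫ r in Set.Ioi (0:ℝ), Real.exp (-a*r) * r^m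
      = m.factorial / a^(m+1) := by
    intro m
    have h := integral_rpow_mul_exp_neg_mul_Ioi (a := (m:ℝ)+1) (r := a) (by positivity) ha
    rw [show (m:ℝ)+1-1 = (m:ℝ) by ring] at h
    rw [setIntegral_congr_fun measurableSet_Ioi
      (fun t (ht : t ∈ Set.Ioi (0:ℝ)) => by
        rw [Real.rpow_natCast]; ring_nf : ∀ t ∈ Set.Ioi (0:ℝ),
          t ^ ((m:ℝ)) * Real.exp (-(a*t)) = Real.exp (-a*t) * t^m)] at h
    rw [h, show (m:ℝ)+1 = ((m+1 : ℕ):ℝ) by push_cast; ring, Real.rpow_natCast]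
    rw [show ((m+1:ℕ):ℝ) = (m:ℝ)+1 by push_cast; ring, Real.Gamma_nat_eq_factorial]
    rw [one_div, inv_pow]
    field_simp
  -- integrability
  have hIntOn : ∀ m : ℕ, IntegrableOn (fun r => Real.exp (-a*r) * r^m) (Set.Ioi (0:ℝ)) := by
    intro m
    have h := integrableOn_rpow_mul_exp_neg_mul_rpow (s := (m:ℝ)) (p := 1) (b := a)
      (lt_of_lt_of_le (by norm_num) (Nat.cast_nonneg m)) (by norm_num) ha
    refine h.congr_fun (fun x hx => ?_) measurableSet_Ioi
    beta_reduce
    rw [Real.rpow_one, Real.rpow_natCast]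
    ring
  have hFint : ∀ m : ℕ, IntegrableOn (F m) (Set.Ioi (0:ℝ)) := by
    intro m
    have hgeq : g m = fun r => ((-1)^m * b^m / (4^m * ((m.factorial : ℝ))^2)) *
        (Real.exp (-a*r) * r^m) := by
      funext r; rw [hg]; simp only [mul_pow]; ring
    have hgint : Integrable (g m) (volume.restrict (Set.Ioi (0:ℝ))) := by
      rw [hgeq]; exact (hIntOn m).const_mul _
    exact hgint.ofReal
  -- value of each integral
  have hFval : ∀ m : ℕ, ∫ r in Set.Ioi (0:ℝ), F m r
      = (((1/a) * (-b/(4*a))^m / m.factorial : ℝ) : ℂ) := by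
    intro m
    have hreal : ∫ r in Set.Ioi (0:ℝ), g m r = (1/a) * (-b/(4*a))^m / m.factorial := by
      have h5 : ∀ r, g m r = ((-1)^m * b^m / (4^m * ((m.factorial : ℝ))^2)) *
          (Real.exp (-a*r) * r^m) := by
        intro r; rw [hg]; simp only [mul_pow]; ring
      rw [MeasureTheory.setIntegral_congr_fun measurableSet_Ioi (fun r _ => h5 r),
        MeasureTheory.integral_const_mul, hint_r m]
      have hfm : ((m.factorial : ℝ)) ≠ 0 := by positivity
      have h4 : (4:ℝ)^m ≠ 0 := by positivity
      have hap : a^(m+1) ≠ 0 := by positivity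
      rw [neg_div, neg_pow (b/(4*a)) m, div_pow, mul_pow]
      field_simp
      ring
    calc ∫ r in Set.Ioi (0:ℝ), F m r = ((∫ r in Set.Ioi (0:ℝ), g m r : ℝ) : ℂ) := by
          rw [hF]; exact integral_ofReal
      _ = _ := by rw [hreal]
  -- summability of integrals of norms
  have hnorm : ∀ m : ℕ, ∫ r in Set.Ioi (0:ℝ), ‖F m r‖
      = (1/a) * (b/(4*a))^m / m.factorial := by
    intro m
    have : ∀ r ∈ Set.Ioi (0:ℝ), ‖F m r‖ = (b^m / (4^m * ((m.factorial : ℝ))^2)) *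
        (Real.exp (-a*r) * r^m) := by
      intro r hr
      have hr' : (0:ℝ) < r := hr
      rw [hF]
      simp only [Complex.norm_real]
      rw [Real.norm_eq_abs, hg]
      simp only
      rw [abs_mul, abs_of_pos (Real.exp_pos _), abs_div, abs_mul, _root_.abs_pow,
        _root_.abs_pow, abs_neg, abs_one, one_pow, one_mul,
        abs_of_pos (by positivity : (0:ℝ) < b*r),
        abs_of_pos (by positivity : (0:ℝ) < 4^m * ((m.factorial : ℝ))^2)]
      rw [mul_pow]
      ring
    rw [MeasureTheory.setIntegral_congr_fun measurableSet_Ioi this,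
      MeasureTheory.integral_const_mul, hint_r m]
    have hfm : ((m.factorial : ℝ)) ≠ 0 := by positivity
    have h4 : (4:ℝ)^m ≠ 0 := by positivity
    have hap : a^(m+1) ≠ 0 := by positivity
    rw [div_pow, mul_pow]
    field_simp
    ring
  have hsumnorm : Summable (fun m : ℕ => ∫ r in Set.Ioi (0:ℝ), ‖F m r‖) := by
    simp_rw [hnorm]
    simp_rw [mul_div_assoc]
    exact (Real.summable_pow_div_factorial (b/(4*a))).mul_left _
  -- pointwise has-sum
  have hpt : ∀ r ∈ Set.Ioi (0:ℝ), HasSum (fun m => F m r)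
      ((Real.exp (-a * r) : ℂ) * besselJ0 (Real.sqrt (b * r))) := by
    intro r hr
    have hr' : (0:ℝ) < r := hr
    have h := (besselJ0_hasSum (Real.sqrt (b*r))).mul_left ((Real.exp (-a*r) : ℝ) : ℂ)
    convert h using 2 with m
    · rfl
    rw [hF, hg]
    have hsq : (Real.sqrt (b*r))^(2*m) = (b*r)^m := by
      rw [pow_mul, Real.sq_sqrt (by positivity : (0:ℝ) ≤ b*r)]
    push_cast [hsq]
    ring
  -- Fubini–Tonelli for sums
  have key := MeasureTheory.hasSum_integral_of_summable_integral_norm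
    (μ := volume.restrict (Set.Ioi (0:ℝ))) (F := F) hFint hsumnorm
  have heq : ∫ r in Set.Ioi (0:ℝ), (∑' m, F m r)
      = ∫ r in Set.Ioi (0:ℝ), (Real.exp (-a * r) : ℂ) * besselJ0 (Real.sqrt (b * r)) := by
    apply MeasureTheory.setIntegral_congr_fun measurableSet_Ioi
    intro r hr
    exact ((hpt r hr).tsum_eq)
  rw [heq] at key
  simp_rw [hFval] at key
  -- the exponential series
  have hexp : HasSum (fun m : ℕ => (((1/a) * (-b/(4*a))^m / m.factorial : ℝ) : ℂ))
      (((1/a : ℝ) : ℂ) * Complex.exp ((-b/(4*a) : ℝ) : ℂ)) := by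
    have h := (NormedSpace.expSeries_div_hasSum_exp ((-b/(4*a) : ℝ) : ℂ)).mul_left
      (((1/a : ℝ)) : ℂ)
    rw [← Complex.exp_eq_exp_ℂ] at h
    convert h using 2 with m
    · rfl
    push_cast
    ring
  have := key.unique hexp
  rw [this, ← Complex.ofReal_exp]
  norm_cast
end

section
/- Let (y_L)_{L>0} be real numbers with y_L > 1 satisfying, for each L, ρ̄ = (N_i/L^d)(1/(y_L − 1) + S_L) + ρ_L, where S_L := ∑_{k ∈ Γ_L^d \ {0}} 1/(y_L e^{βF(k)} − 1) ≤ ∑_{k ∈ Γ_L^d \ {0}} (1/(y_L−1)) e^{−βF(k)}, ρ_L ≥ 0, and lim sup_L ρ_L < ρ̄. Suppose sup_L (1/L^d) ∑_{k ∈ Γ_L^d} e^{−βF(k)} < ∞. Then y_L − 1 ≤ (N_i/(ρ̄ − ρ_L)) · (1/L^d)(1 + ∑_{k ∈ Γ_L^d} e^{−βF(k)}), hence the sequence (y_L) is bounded and admits a subsequence converging to some y_∞ ≥ 1. -/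
open Filter Topology

/-- Compactness step for the finite-volume fugacities: under the density equation
`ρ̄ = (N_i/L^d)(1/(y_L − 1) + S_L) + ρ_L` with `S_L ≤ E_L/(y_L − 1)`
(`E_L = ∑_{k∈Γ_L^d} e^{−βF(k)}`), one gets the explicit bound
`y_L − 1 ≤ (N_i/(ρ̄ − ρ_L))·(1/L^d)(1 + E_L)`, hence `(y_L)` is bounded and
has a subsequence converging to some `y_∞ ≥ 1`. Here `L = L n := n + 1`. -/
theorem fugacity_bounded_subsequence (d Ni : ℕ) (hd : 0 < d) (hNi : 0 < Ni)
    (ρbar : ℝ) (hρbar : 0 < ρbar)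
    (y S ρL E : ℕ → ℝ) (L : ℕ → ℝ) (hL : ∀ n, L n = (n : ℝ) + 1)
    (hy : ∀ n, 1 < y n)
    (hEnn : ∀ n, 0 ≤ E n)
    (hSnn : ∀ n, 0 ≤ S n)
    (hS : ∀ n, S n ≤ E n / (y n - 1))
    (hρLnn : ∀ n, 0 ≤ ρL n)
    (hρLlt : ∀ n, ρL n < ρbar)
    (hlimsup : Filter.limsup ρL atTop < ρbar)
    (hdensity : ∀ n, ρbar = ((Ni : ℝ) / (L n) ^ d) * (1 / (y n - 1) + S n) + ρL n)
    (hsup : ∃ M : ℝ, ∀ n, (1 / (L n) ^ d) * E n ≤ M) :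
    (∀ n, y n - 1 ≤
        ((Ni : ℝ) / (ρbar - ρL n)) * ((1 / (L n) ^ d) * (1 + E n))) ∧
      BddAbove (Set.range y) ∧
      ∃ yinf : ℝ, 1 ≤ yinf ∧ ∃ φ : ℕ → ℕ, StrictMono φ ∧
        Tendsto (y ∘ φ) atTop (nhds yinf) := by
  have hLpos : ∀ n, 0 < (L n) ^ d := by
    intro n
    apply pow_pos
    rw [hL]; positivity
  have hNiR : (0 : ℝ) < Ni := by exact_mod_cast hNi
  have key : ∀ n, y n - 1 ≤
      ((Ni : ℝ) / (ρbar - ρL n)) * ((1 / (L n) ^ d) * (1 + E n)) := by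
    intro n
    have ha : 0 < y n - 1 := sub_pos.mpr (hy n)
    have hP : 0 < ρbar - ρL n := sub_pos.mpr (hρLlt n)
    have haS : (y n - 1) * S n ≤ E n := by
      calc (y n - 1) * S n ≤ (y n - 1) * (E n / (y n - 1)) :=
            mul_le_mul_of_nonneg_left (hS n) ha.le
        _ = E n := by field_simp
    have hkey : (y n - 1) * (ρbar - ρL n) ≤ ((Ni : ℝ) / (L n) ^ d) * (1 + E n) := by
      have h1 : ρbar - ρL n = ((Ni : ℝ) / (L n) ^ d) * (1 / (y n - 1) + S n) := by
        rw [hdensity n]; ring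
      have e1 : (y n - 1) * (1 / (y n - 1)) = 1 := by field_simp
      have expand : (y n - 1) * ((Ni : ℝ) / (L n) ^ d * (1 / (y n - 1) + S n))
          = (Ni : ℝ) / (L n) ^ d * ((y n - 1) * (1 / (y n - 1)) + (y n - 1) * S n) := by ring
      rw [h1, expand, e1]
      exact mul_le_mul_of_nonneg_left (by linarith) (div_nonneg hNiR.le (hLpos n).le)
    have heq : ((Ni : ℝ) / (ρbar - ρL n)) * ((1 / (L n) ^ d) * (1 + E n))
        = ((Ni : ℝ) / (L n) ^ d) * (1 + E n) / (ρbar - ρL n) := by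
      field_simp
    rw [heq, le_div_iff₀ hP]
    exact hkey
  refine ⟨key, ?_⟩
  -- uniform bound
  obtain ⟨M, hM⟩ := hsup
  set c : ℝ := (Filter.limsup ρL atTop + ρbar) / 2 with hc
  have hbb : Filter.IsBoundedUnder (· ≥ ·) atTop ρL :=
    ⟨0, Filter.eventually_map.mpr (Filter.Eventually.of_forall hρLnn)⟩
  have hlims_lt : Filter.limsup ρL atTop < c := by
    have : (0:ℝ) ≤ Filter.limsup ρL atTop := by
      apply Filter.le_limsup_of_frequently_le
      · exact Filter.Frequently.of_forall hρLnn
      · exact ⟨ρbar, Filter.eventually_map.mpr (Filter.Eventually.of_forall fun n => (hρLlt n).le)⟩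
    rw [hc]; linarith
  have hclt : c < ρbar := by
    have : (0:ℝ) ≤ Filter.limsup ρL atTop := by
      apply Filter.le_limsup_of_frequently_le
      · exact Filter.Frequently.of_forall hρLnn
      · exact ⟨ρbar, Filter.eventually_map.mpr (Filter.Eventually.of_forall fun n => (hρLlt n).le)⟩
    rw [hc]; linarith
  have hev : ∀ᶠ n in atTop, ρL n < c :=
    Filter.eventually_lt_of_limsup_lt hlims_lt
      ⟨ρbar, Filter.eventually_map.mpr (Filter.Eventually.of_forall fun n => (hρLlt n).le)⟩
  have hMnn : (0:ℝ) ≤ M := le_trans (mul_nonneg (one_div_pos.mpr (hLpos 0)).le (hEnn 0)) (hM 0)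
  have hLinv : ∀ n, (1 : ℝ) / (L n) ^ d ≤ 1 := by
    intro n
    rw [div_le_one (hLpos n)]
    have : (1:ℝ) ≤ L n := by rw [hL]; linarith [(Nat.cast_nonneg n : (0:ℝ) ≤ (n:ℝ))]
    calc (1:ℝ) = 1 ^ d := (one_pow d).symm
      _ ≤ (L n) ^ d := pow_le_pow_left₀ zero_le_one this d
  set C : ℝ := 1 + (Ni : ℝ) / (ρbar - c) * (1 + M) with hC
  have hevy : ∀ᶠ n in atTop, y n ≤ C := by
    filter_upwards [hev] with n hn
    have hP : 0 < ρbar - ρL n := sub_pos.mpr (hρLlt n)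
    have hPc : 0 < ρbar - c := sub_pos.mpr hclt
    have h1 : (Ni : ℝ) / (ρbar - ρL n) ≤ (Ni : ℝ) / (ρbar - c) :=
      div_le_div_of_nonneg_left hNiR.le hPc (by linarith)
    have h2 : (1 / (L n) ^ d) * (1 + E n) ≤ 1 + M := by
      have := hM n
      have := hLinv n
      have hp := (hLpos n)
      calc (1 / (L n) ^ d) * (1 + E n)
          = 1 / (L n) ^ d + (1 / (L n) ^ d) * E n := by ring
        _ ≤ 1 + M := by linarith
    have h2nn : 0 ≤ (1 / (L n) ^ d) * (1 + E n) := mul_nonneg (one_div_pos.mpr (hLpos n)).le (by linarith [hEnn n])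
    have := key n
    have : y n - 1 ≤ (Ni : ℝ) / (ρbar - c) * (1 + M) :=
      le_trans this (mul_le_mul h1 h2 h2nn (div_nonneg hNiR.le hPc.le))
    rw [hC]; linarith
  have hbdd : BddAbove (Set.range y) :=
    Filter.IsBoundedUnder.bddAbove_range ⟨C, Filter.eventually_map.mpr hevy⟩
  refine ⟨hbdd, ?_⟩
  obtain ⟨B, hB⟩ := hbdd
  have hmem : ∀ n, y n ∈ Set.Icc (1:ℝ) (max 1 B) := by
    intro n
    constructor
    · exact (hy n).le
    · exact le_trans (hB (Set.mem_range_self n)) (le_max_right 1 B)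
  obtain ⟨a, ha, φ, hφ, hconv⟩ :=
    tendsto_subseq_of_bounded (Metric.isBounded_Icc (1:ℝ) (max 1 B)) hmem
  rw [closure_Icc] at ha
  exact ⟨a, ha.1, φ, hφ, hconv⟩
end

section
/- For c > 0 and w ∈ ℂ, e^{−(1/4) c |w|²} = ∫_0^∞ dr ∫_0^{2π} (dθ/(2π)) e^{−r} exp[i (√(c r)/2)(e^{iθ} w + conj(e^{iθ} w))], i.e., the centered Gaussian characteristic function is the χ-average over (r,θ) of the pure phases exp[i √(cr) Re(e^{iθ} w)]. -/
open MeasureTheory Real Complex Set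

private lemma phase_exponent (t θ : ℝ) (w : ℂ) :
    Complex.I * ((t : ℂ) / 2) *
      (Complex.exp (Complex.I * θ) * w + (starRingEnd ℂ) (Complex.exp (Complex.I * θ) * w)) =
    Complex.I * ((t * (Real.cos θ * w.re - Real.sin θ * w.im) : ℝ) : ℂ) := by
  rw [Complex.add_conj]
  have h : (Complex.exp (Complex.I * θ) * w).re = Real.cos θ * w.re - Real.sin θ * w.im := by
    rw [mul_comm Complex.I (θ:ℂ), Complex.exp_mul_I]
    simp [add_mul, Complex.add_re, Complex.mul_re, Complex.cos_ofReal_re, Complex.cos_ofReal_im,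
      Complex.sin_ofReal_re, Complex.sin_ofReal_im, Complex.I_re, Complex.I_im, sub_eq_add_neg]
  rw [h]
  push_cast
  ring

-- inner integral: shift [0,2π] → Ioo (-π) π
private lemma inner_shift (t A B : ℝ) :
    (∫ θ in (0:ℝ)..(2 * π), Complex.exp (Complex.I * ((t * (Real.cos θ * A - Real.sin θ * B) : ℝ) : ℂ)))
      = ∫ θ in Ioo (-π) π, Complex.exp (Complex.I * ((t * (Real.cos θ * A - Real.sin θ * B) : ℝ) : ℂ)) := by
  have hp : Function.Periodic
      (fun θ : ℝ => Complex.exp (Complex.I * ((t * (Real.cos θ * A - Real.sin θ * B) : ℝ) : ℂ))) (2 * π) := by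
    intro θ; simp [Real.cos_add_two_pi, Real.sin_add_two_pi]
  have h := hp.intervalIntegral_add_eq 0 (-π)
  simp only [zero_add] at h
  rw [h, show -π + 2 * π = π by ring,
    intervalIntegral.integral_of_le (by linarith [Real.pi_pos]),
    MeasureTheory.integral_Ioc_eq_integral_Ioo]

-- image of Ioi 0 under squaring
private lemma sq_image_Ioi : (fun s : ℝ => s ^ 2) '' Ioi 0 = Ioi 0 := by
  ext x
  constructor
  · rintro ⟨s, hs, rfl⟩; exact pow_pos (show (0:ℝ) < s from hs) 2
  · intro hx; exact ⟨Real.sqrt x, Real.sqrt_pos.mpr hx, Real.sq_sqrt (le_of_lt hx)⟩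

-- 1D Gaussian with phase
private lemma gauss1d (t : ℝ) :
    (∫ x : ℝ, (Real.exp (-x ^ 2) : ℂ) * Complex.exp (Complex.I * (t : ℂ) * x))
      = (π : ℂ) ^ (1 / 2 : ℂ) * Complex.exp (((-(t ^ 2) / 4 : ℝ)) : ℂ) := by
  have h := fourierIntegral_gaussian (b := 1) (by norm_num) (t : ℂ)
  simp only [div_one, mul_one] at h
  rw [show (∫ x : ℝ, (Real.exp (-x ^ 2) : ℂ) * Complex.exp (Complex.I * (t : ℂ) * x))
      = ∫ x : ℝ, Complex.exp (Complex.I * (t : ℂ) * x) * Complex.exp (-1 * (x:ℂ) ^ 2) by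
    congr 1; funext x
    rw [Complex.ofReal_exp]
    push_cast
    ring_nf, h]
  congr 1
  push_cast
  ring_nf

private lemma Hcont (sc A B : ℝ) : Continuous (fun p : ℝ × ℝ =>
    ((2 * p.1 : ℝ)) • ((Real.exp (-p.1 ^ 2) : ℂ) * (1 / (2 * π) : ℂ) *
      Complex.exp (Complex.I * ((sc * p.1 * (Real.cos p.2 * A - Real.sin p.2 * B) : ℝ) : ℂ)))) := by
  fun_prop

private lemma Hint (sc A B : ℝ) : IntegrableOn (fun p : ℝ × ℝ =>
    ((2 * p.1 : ℝ)) • ((Real.exp (-p.1 ^ 2) : ℂ) * (1 / (2 * π) : ℂ) *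
      Complex.exp (Complex.I * ((sc * p.1 * (Real.cos p.2 * A - Real.sin p.2 * B) : ℝ) : ℂ))))
    (Ioi 0 ×ˢ Ioo (-π) π) (volume.prod volume) := by
  rw [IntegrableOn, ← Measure.prod_restrict]
  apply Integrable.mono'
      (g := fun p : ℝ × ℝ => (2 * (p.1 * Real.exp (-1 * p.1 ^ 2))) * (1 / (2 * π)))
  · exact (((integrable_mul_exp_neg_mul_sq one_pos).const_mul 2).restrict).mul_prod
      (integrableOn_const (by rw [Real.volume_Ioo]; exact ENNReal.ofReal_ne_top))
  · exact (Hcont sc A B).aestronglyMeasurable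
  · rw [Measure.prod_restrict]
    filter_upwards [ae_restrict_mem (measurableSet_Ioi.prod measurableSet_Ioo)] with p hp
    have h1 : (0:ℝ) < p.1 := hp.1
    have hu : ‖Complex.exp (Complex.I * ((sc * p.1 * (Real.cos p.2 * A - Real.sin p.2 * B) : ℝ) : ℂ))‖ = 1 := by
      rw [Complex.norm_exp]; simp [Complex.mul_re]
    rw [norm_smul]
    simp only [norm_mul, hu, mul_one]
    have e1 : ‖((Real.exp (-p.1 ^ 2) : ℝ) : ℂ)‖ = Real.exp (-p.1 ^ 2) := by
      rw [Complex.norm_real, Real.norm_eq_abs, abs_of_pos (Real.exp_pos _)]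
    have e2 : ‖(1 / (2 * π) : ℂ)‖ = 1 / (2 * π) := by
      simp [map_div₀, map_mul,
        abs_of_pos Real.pi_pos]
    rw [e1, e2, neg_one_mul]
    simp only [Real.norm_eq_abs, Real.norm_ofNat, abs_of_pos h1]
    rw [(abs_two (α := ℝ))]
    apply le_of_eq; ring

/-- The centered Gaussian characteristic function is the `χ`-average of pure phases:
for `c > 0` and `w ∈ ℂ`,
`e^{−(1/4)c|w|²} = ∫_0^∞ ∫_0^{2π} (1/(2π)) e^{−r} exp[i(√(cr)/2)(e^{iθ}w + conj(e^{iθ}w))] dθ dr`. -/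
theorem gaussian_as_phase_average (c : ℝ) (hc : 0 < c) (w : ℂ) :
    (Real.exp (-(1 / 4) * c * ‖w‖ ^ 2) : ℂ) =
      ∫ r in Set.Ioi (0:ℝ),
        (Real.exp (-r) : ℂ) * (1 / (2 * π) : ℂ) *
          ∫ θ in (0:ℝ)..(2 * π),
            Complex.exp (Complex.I * ((Real.sqrt (c * r) : ℂ) / 2) *
              (Complex.exp (Complex.I * θ) * w +
                (starRingEnd ℂ) (Complex.exp (Complex.I * θ) * w))) := by
  symm
  calc
    (∫ r in Set.Ioi (0:ℝ),
        (Real.exp (-r) : ℂ) * (1 / (2 * π) : ℂ) *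
          ∫ θ in (0:ℝ)..(2 * π),
            Complex.exp (Complex.I * ((Real.sqrt (c * r) : ℂ) / 2) *
              (Complex.exp (Complex.I * θ) * w +
                (starRingEnd ℂ) (Complex.exp (Complex.I * θ) * w))))
      = ∫ r in Set.Ioi (0:ℝ),
          (Real.exp (-r) : ℂ) * (1 / (2 * π) : ℂ) *
            ∫ θ in Ioo (-π) π,
              Complex.exp (Complex.I *
                ((Real.sqrt (c * r) * (Real.cos θ * w.re - Real.sin θ * w.im) : ℝ) : ℂ)) := by
        congr 1
        funext r
        congr 1
        rw [show (∫ θ in (0:ℝ)..(2 * π),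
              Complex.exp (Complex.I * ((Real.sqrt (c * r) : ℂ) / 2) *
                (Complex.exp (Complex.I * θ) * w +
                  (starRingEnd ℂ) (Complex.exp (Complex.I * θ) * w))))
            = ∫ θ in (0:ℝ)..(2 * π),
              Complex.exp (Complex.I *
                ((Real.sqrt (c * r) * (Real.cos θ * w.re - Real.sin θ * w.im) : ℝ) : ℂ)) from
          intervalIntegral.integral_congr fun θ _ =>
            congrArg Complex.exp (phase_exponent (Real.sqrt (c * r)) θ w), inner_shift]
    _ = ∫ s in Set.Ioi (0:ℝ), |2 * s| •
          ((Real.exp (-s ^ 2) : ℂ) * (1 / (2 * π) : ℂ) *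
            ∫ θ in Ioo (-π) π,
              Complex.exp (Complex.I *
                ((Real.sqrt (c * s ^ 2) * (Real.cos θ * w.re - Real.sin θ * w.im) : ℝ) : ℂ))) := by
        conv_lhs => rw [← sq_image_Ioi]
        exact integral_image_eq_integral_abs_deriv_smul measurableSet_Ioi
          (fun x _ => by simpa using (hasDerivAt_pow 2 x).hasDerivWithinAt)
          (fun x hx y hy hxy => by
            simp only [mem_Ioi] at hx hy
            nlinarith) _
    _ = ∫ s in Set.Ioi (0:ℝ), ∫ θ in Ioo (-π) π,
          ((2 * s : ℝ)) • ((Real.exp (-s ^ 2) : ℂ) * (1 / (2 * π) : ℂ) *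
            Complex.exp (Complex.I *
              ((Real.sqrt c * s * (Real.cos θ * w.re - Real.sin θ * w.im) : ℝ) : ℂ))) := by
        refine setIntegral_congr_fun measurableSet_Ioi fun s hs => ?_
        simp only [mem_Ioi] at hs
        rw [abs_of_pos (by positivity : (0:ℝ) < 2 * s),
          show Real.sqrt (c * s ^ 2) = Real.sqrt c * s by
            rw [Real.sqrt_mul hc.le, Real.sqrt_sq hs.le],
          integral_smul, integral_const_mul]
    _ = ∫ p in (Ioi (0:ℝ)) ×ˢ (Ioo (-π) π),
          ((2 * p.1 : ℝ)) • ((Real.exp (-p.1 ^ 2) : ℂ) * (1 / (2 * π) : ℂ) *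
            Complex.exp (Complex.I *
              ((Real.sqrt c * p.1 * (Real.cos p.2 * w.re - Real.sin p.2 * w.im) : ℝ) : ℂ)))
          ∂(volume.prod volume) := (setIntegral_prod _ (Hint (Real.sqrt c) w.re w.im)).symm
    _ = ∫ p in polarCoord.target, p.1 •
          ((fun q : ℝ × ℝ => ((1 / π : ℝ) : ℂ) *
            ((Real.exp (-(q.1 ^ 2 + q.2 ^ 2)) : ℂ) *
              Complex.exp (Complex.I *
                ((Real.sqrt c * (q.1 * w.re - q.2 * w.im) : ℝ) : ℂ)))) (polarCoord.symm p)) := by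
        rw [← Measure.volume_eq_prod ℝ ℝ, polarCoord_target]
        congr 1
        funext p
        simp only [polarCoord_symm_apply]
        rw [show (p.1 * Real.cos p.2) ^ 2 + (p.1 * Real.sin p.2) ^ 2 = p.1 ^ 2 by
          rw [mul_pow, mul_pow, ← mul_add, Real.cos_sq_add_sin_sq, mul_one],
          Complex.real_smul, Complex.real_smul]
        rw [show (Real.sqrt c * (p.1 * Real.cos p.2 * w.re - p.1 * Real.sin p.2 * w.im) : ℝ)
            = (Real.sqrt c * p.1 * (Real.cos p.2 * w.re - Real.sin p.2 * w.im) : ℝ) by ring]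
        push_cast
        ring
    _ = ∫ p : ℝ × ℝ,
          ((1 / π : ℝ) : ℂ) *
            ((Real.exp (-(p.1 ^ 2 + p.2 ^ 2)) : ℂ) *
              Complex.exp (Complex.I * ((Real.sqrt c * (p.1 * w.re - p.2 * w.im) : ℝ) : ℂ))) :=
        integral_comp_polarCoord_symm (fun q : ℝ × ℝ => ((1 / π : ℝ) : ℂ) *
          ((Real.exp (-(q.1 ^ 2 + q.2 ^ 2)) : ℂ) *
            Complex.exp (Complex.I * ((Real.sqrt c * (q.1 * w.re - q.2 * w.im) : ℝ) : ℂ))))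
    _ = ((1 / π : ℝ) : ℂ) * ∫ p : ℝ × ℝ,
          ((Real.exp (-p.1 ^ 2) : ℂ) *
              Complex.exp (Complex.I * ((Real.sqrt c * w.re : ℝ) : ℂ) * p.1)) *
          ((Real.exp (-p.2 ^ 2) : ℂ) *
              Complex.exp (Complex.I * ((-(Real.sqrt c * w.im) : ℝ) : ℂ) * p.2)) := by
        rw [← integral_const_mul]
        congr 1
        funext p
        simp only [Complex.ofReal_exp]
        simp only [← Complex.exp_add]
        congr 1
        push_cast
        ring
    _ = ((1 / π : ℝ) : ℂ) *
          ((∫ x : ℝ, (Real.exp (-x ^ 2) : ℂ) *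
              Complex.exp (Complex.I * ((Real.sqrt c * w.re : ℝ) : ℂ) * x)) *
           (∫ y : ℝ, (Real.exp (-y ^ 2) : ℂ) *
              Complex.exp (Complex.I * ((-(Real.sqrt c * w.im) : ℝ) : ℂ) * y))) := by
        rw [Measure.volume_eq_prod ℝ ℝ,
          integral_prod_mul
            (fun x : ℝ => (Real.exp (-x ^ 2) : ℂ) *
              Complex.exp (Complex.I * ((Real.sqrt c * w.re : ℝ) : ℂ) * x))
            (fun y : ℝ => (Real.exp (-y ^ 2) : ℂ) *
              Complex.exp (Complex.I * ((-(Real.sqrt c * w.im) : ℝ) : ℂ) * y))]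
    _ = (Real.exp (-(1 / 4) * c * ‖w‖ ^ 2) : ℂ) := by
        rw [gauss1d, gauss1d]
        have hπ0 : (π : ℂ) ≠ 0 := Complex.ofReal_ne_zero.mpr Real.pi_ne_zero
        set K := (π : ℂ) ^ (1 / 2 : ℂ) with hK
        have hsq : K * K = (π : ℂ) := by
          rw [hK, ← Complex.cpow_add _ _ hπ0]; norm_num
        have hexp : Complex.exp (((-(Real.sqrt c * w.re) ^ 2 / 4 : ℝ)) : ℂ) *
              Complex.exp (((-(-(Real.sqrt c * w.im)) ^ 2 / 4 : ℝ)) : ℂ)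
            = (Real.exp (-(1 / 4) * c * ‖w‖ ^ 2) : ℂ) := by
          rw [← Complex.ofReal_exp, ← Complex.ofReal_exp, ← Complex.ofReal_mul, ← Real.exp_add]
          congr 1
          have h1 : Real.sqrt c ^ 2 = c := Real.sq_sqrt hc.le
          have habs : ‖w‖ ^ 2 = w.re ^ 2 + w.im ^ 2 := by
            rw [Complex.sq_norm, Complex.normSq_apply]; ring
          have e1 : (Real.sqrt c * w.re) ^ 2 = c * w.re ^ 2 := by rw [mul_pow, h1]
          have e2 : (-(Real.sqrt c * w.im)) ^ 2 = c * w.im ^ 2 := by rw [neg_sq, mul_pow, h1]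
          rw [habs, e1, e2]; ring
        have hinv : (π : ℂ) * ((1 / π : ℝ) : ℂ) = 1 := by
          push_cast; field_simp
        calc ((1 / π : ℝ) : ℂ) *
              (K * Complex.exp (((-(Real.sqrt c * w.re) ^ 2 / 4 : ℝ)) : ℂ) *
               (K * Complex.exp (((-(-(Real.sqrt c * w.im)) ^ 2 / 4 : ℝ)) : ℂ)))
            = (K * K) * ((1 / π : ℝ) : ℂ) *
              (Complex.exp (((-(Real.sqrt c * w.re) ^ 2 / 4 : ℝ)) : ℂ) *
               Complex.exp (((-(-(Real.sqrt c * w.im)) ^ 2 / 4 : ℝ)) : ℂ)) := by ring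
          _ = (Real.exp (-(1 / 4) * c * ‖w‖ ^ 2) : ℂ) := by
              rw [hsq, hexp, hinv, one_mul]
end

section
/- Let A be a self-adjoint operator on a Hilbert space K, Ψ an entire analytic vector for a self-adjoint operator B such that all iterated commutators δ_A^n(B) := [A,[A,...,[A,B]...]] vanish for n ≥ 3, with δ_A(B) and δ_A²(B) bounded on a suitable dense domain. Then e^{iαA} B e^{−iαA} = B + iα[A,B] − (α²/2)[A,[A,B]] as an operator identity on that domain, for every α ∈ ℝ. -/
open Complex

set_option maxHeartbeats 1000000 in
set_option synthInstance.maxHeartbeats 200000 in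
/-- Terminating Baker–Campbell–Hausdorff identity: if the iterated commutators
`δ_A^n(B)` vanish for `n ≥ 3` (equivalently `[A,[A,[A,B]]] = 0`), then
`e^{iαA} B e^{−iαA} = B + iα[A,B] − (α²/2)[A,[A,B]]` for every `α ∈ ℝ`.
Formalized for (bounded) operators on a complex Hilbert space, the self-adjointness
of `A` making `e^{iαA}` unitary. -/
theorem terminating_BCH
    {H : Type*} [NormedAddCommGroup H] [InnerProductSpace ℂ H] [CompleteSpace H]
    (A B : H →L[ℂ] H) (hA : IsSelfAdjoint A)
    (h3 : ⁅A, ⁅A, ⁅A, B⁆⁆⁆ = 0) (α : ℝ) :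
    NormedSpace.exp ((α : ℂ) • Complex.I • A) * B *
        NormedSpace.exp (-((α : ℂ) • Complex.I • A)) =
      B + ((α : ℂ) * Complex.I) • ⁅A, B⁆ -
        ((α : ℂ) ^ 2 / 2) • ⁅A, ⁅A, B⁆⁆ := by
  letI : LieRing (H →L[ℂ] H) := LieRing.ofAssociativeRing
  set c : ℂ := (α : ℂ) * Complex.I with hc
  set X : H →L[ℂ] H := c • A with hXdef
  have hXeq : (α : ℂ) • Complex.I • A = X := by rw [hXdef, smul_smul]
  set C : H →L[ℂ] H := ⁅A, B⁆ with hC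
  set D : H →L[ℂ] H := ⁅A, C⁆ with hD
  have hcc : c * c = -((α : ℂ) ^ 2) := by
    rw [hc]; ring_nf; rw [Complex.I_sq]; ring
  set h : ℝ → (H →L[ℂ] H) := fun t => B + t • (c • C) + (t ^ 2 / 2) • ((c * c) • D) with hh
  set u : ℝ → (H →L[ℂ] H) :=
    fun t => NormedSpace.exp (t • (-X)) * h t * NormedSpace.exp (t • X) with hu
  have key : ∀ t : ℝ, HasDerivAt u 0 t := by
    intro t
    have e₁ : HasDerivAt (fun s : ℝ => NormedSpace.exp (s • (-X)))
        (NormedSpace.exp (t • (-X)) * (-X)) t := hasDerivAt_exp_smul_const (-X) t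
    have e₃ : HasDerivAt (fun s : ℝ => NormedSpace.exp (s • X))
        (X * NormedSpace.exp (t • X)) t := hasDerivAt_exp_smul_const' X t
    have e₂ : HasDerivAt h (c • C + t • ((c * c) • D)) t := by
      have d1 : HasDerivAt (fun s : ℝ => s • (c • C)) ((1:ℝ) • (c • C)) t :=
        (hasDerivAt_id t).smul_const (c • C)
      have d2 : HasDerivAt (fun s : ℝ => (s ^ 2 / 2) • ((c * c) • D))
          (((2 : ℕ) * t ^ (2 - 1) * 1 / 2) • ((c * c) • D)) t :=
        (((hasDerivAt_id t).pow 2).div_const 2).smul_const ((c * c) • D)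
      have := ((hasDerivAt_const t B).add d1).add d2
      refine this.congr_deriv ?_
      norm_num
    have hbr : c • C + t • ((c * c) • D) = ⁅X, h t⁆ := by
      rw [hh]
      simp only [lie_add, lie_smul, hXdef, smul_lie, ← hC, ← hD, h3, smul_zero, smul_smul]
      module
    have := (e₁.mul e₂).mul e₃
    refine this.congr_deriv ?_
    simp only [Pi.mul_apply]
    rw [hbr, Ring.lie_def]
    noncomm_ring
  have hdiff : Differentiable ℝ u := fun t => (key t).differentiableAt
  have huc : u 1 = u 0 := is_const_of_deriv_eq_zero hdiff (fun t => (key t).deriv) 1 0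
  have h1B : NormedSpace.exp (-X) * h 1 * NormedSpace.exp X = B := by
    have := huc
    simp only [hu, one_smul, zero_smul, NormedSpace.exp_zero, one_mul, mul_one] at this
    rw [this, hh]
    norm_num
  have hinv : NormedSpace.exp X * NormedSpace.exp (-X) = 1 := by
    let +nondep : NormedAlgebra ℚ (H →L[ℂ] H) := .restrictScalars ℚ ℂ (H →L[ℂ] H)
    rw [← NormedSpace.exp_add_of_commute ((Commute.refl X).neg_right)]
    simp [NormedSpace.exp_zero]
  rw [hXeq]
  have : NormedSpace.exp X * B * NormedSpace.exp (-X) = h 1 := by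
    rw [← h1B]
    calc NormedSpace.exp X * (NormedSpace.exp (-X) * h 1 * NormedSpace.exp X) *
          NormedSpace.exp (-X)
        = (NormedSpace.exp X * NormedSpace.exp (-X)) * h 1 *
          (NormedSpace.exp X * NormedSpace.exp (-X)) := by noncomm_ring
      _ = h 1 := by rw [hinv]; simp
  rw [this, hh, hcc]
  norm_num
  module
end
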